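/- Let H be a connected graph with at least two vertices and u ∈ V(H), and let r > g ≥ 4. Let G be the graph obtained by joining u to the pendant vertex of U_{r,g}^l by an edge, and let G' be the graph obtained by joining u to the pendant vertex of U_{r,3}^l by an edge. Then ε(G) < ε(G'). -/
import Mathlib


open SimpleGraph

/-- The eccentricity of a vertex: maximum distance to any vertex. -/
noncomputable def ecc {V : Type*} (G : SimpleGraph V) (v : V) : ℕ :=
  ⨆ u, G.dist v u

/-- The total eccentricity index: sum of eccentricities of all vertices. -/
noncomputable def totalEcc {V : Type*} [Fintype V] (G : SimpleGraph V) : ℕ :=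
  ∑ v, ecc G v

/-- A pendant vertex: a vertex of degree one, i.e. with exactly one neighbour. -/
def IsPendant {V : Type*} (G : SimpleGraph V) (v : V) : Prop :=
  ∃! u, G.Adj v u

/-- A cut vertex: a vertex whose removal disconnects the graph. -/
def IsCutVertex {V : Type*} (G : SimpleGraph V) (w : V) : Prop :=
  ¬ (G.induce {v | v ≠ w}).Connected

/-- distance between two subgraphs -/
noncomputable def subgraphDist {V : Type*} (G : SimpleGraph V) (B B' : G.Subgraph) : ℕ :=
  sInf {d | ∃ u ∈ B.verts, ∃ w ∈ B'.verts, G.dist u w = d}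

/-- A 2-connected subgraph: at least two vertices, connected, and no cut vertex. -/
def TwoConn {V : Type*} {G : SimpleGraph V} (H : G.Subgraph) : Prop :=
  2 ≤ H.verts.ncard ∧ H.coe.Connected ∧ ∀ w, ¬ IsCutVertex H.coe w

/-- A block: a maximal 2-connected subgraph. -/
def IsBlock {V : Type*} {G : SimpleGraph V} (H : G.Subgraph) : Prop :=
  TwoConn H ∧ ∀ H' : G.Subgraph, H ≤ H' → TwoConn H' → H' = H

/-- A pendant block: a block containing exactly one cut vertex of `G`. -/
def IsPendantBlock {V : Type*} (G : SimpleGraph V) (H : G.Subgraph) : Prop :=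
  ∃! w, w ∈ H.verts ∧ IsCutVertex G w

/-- `G_{k,l}`: the graph obtained from `G` by attaching two new paths,
with `k` resp. `l` new vertices, at the vertex `v`. -/
def attachTwoPaths {V : Type*} (G : SimpleGraph V) (v : V) (k l : ℕ) :
    SimpleGraph (V ⊕ (Fin k ⊕ Fin l)) :=
  SimpleGraph.fromRel (fun p q =>
    match p, q with
    | .inl x, .inl y => G.Adj x y
    | .inl x, .inr (.inl i) => x = v ∧ i.val = 0
    | .inl x, .inr (.inr i) => x = v ∧ i.val = 0
    | .inr (.inl i), .inr (.inl j) => i.val + 1 = j.val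
    | .inr (.inr i), .inr (.inr j) => i.val + 1 = j.val
    | _, _ => False)

/-- The graph obtained from `H1`, `H2` and the path `P_d = v_1 v_2 … v_d` by identifying
`u ∈ V(H1)`, `v ∈ V(H2)` and `v_1` into a single vertex.  The `Fin (d-1)` part records the
path vertices `v_2, …, v_d`. -/
def glueMid {V1 V2 : Type*} (H1 : SimpleGraph V1) (H2 : SimpleGraph V2)
    (u : V1) (v : V2) (d : ℕ) :
    SimpleGraph (V1 ⊕ ({x : V2 // x ≠ v} ⊕ Fin (d - 1))) :=
  SimpleGraph.fromRel (fun p q =>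
    match p, q with
    | .inl x, .inl y => H1.Adj x y
    | .inl x, .inr (.inl y) => x = u ∧ H2.Adj v y.1
    | .inl x, .inr (.inr i) => x = u ∧ i.val = 0
    | .inr (.inl x), .inr (.inl y) => H2.Adj x.1 y.1
    | .inr (.inr i), .inr (.inr j) => i.val + 1 = j.val
    | _, _ => False)

/-- The graph obtained from `H1`, `H2` and the path `P_d = v_1 v_2 … v_d` by identifying
`u ∈ V(H1)` with `v_1` and `v ∈ V(H2)` with `v_d`.  The `Fin (d-1)` part records the path
vertices `v_2, …, v_d` (the last one being identified with `v`). -/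
def glueEnds {V1 V2 : Type*} (H1 : SimpleGraph V1) (H2 : SimpleGraph V2)
    (u : V1) (v : V2) (d : ℕ) :
    SimpleGraph (V1 ⊕ ({x : V2 // x ≠ v} ⊕ Fin (d - 1))) :=
  SimpleGraph.fromRel (fun p q =>
    match p, q with
    | .inl x, .inl y => H1.Adj x y
    | .inl x, .inr (.inr i) => x = u ∧ i.val = 0
    | .inr (.inl x), .inr (.inl y) => H2.Adj x.1 y.1
    | .inr (.inr i), .inr (.inl y) => i.val + 1 = d - 1 ∧ H2.Adj v y.1
    | .inr (.inr i), .inr (.inr j) => i.val + 1 = j.val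
    | _, _ => False)

/-- `U_{n,g}^l`: the unicyclic graph on `n` vertices obtained by joining one end vertex of
the path `P_{n-g}` to a vertex of the cycle `C_g` by an edge. -/
def UnlGraph (n g : ℕ) : SimpleGraph (Fin (n - g) ⊕ Fin g) :=
  SimpleGraph.fromRel (fun p q =>
    match p, q with
    | .inl i, .inl j => i.val + 1 = j.val
    | .inl i, .inr j => i.val + 1 = n - g ∧ j.val = 0
    | .inr i, .inr j => i.val + 1 = j.val ∨ (i.val = 0 ∧ j.val + 1 = g)
    | _, _ => False)

/-- `U_{n,g}^p`: the unicyclic graph on `n` vertices obtained by attaching `n - g` pendant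
vertices to one vertex of the cycle `C_g`. -/
def UnpGraph (n g : ℕ) : SimpleGraph (Fin g ⊕ Fin (n - g)) :=
  SimpleGraph.fromRel (fun p q =>
    match p, q with
    | .inl i, .inl j => i.val + 1 = j.val ∨ (i.val = 0 ∧ j.val + 1 = g)
    | .inl i, .inr _ => i.val = 0
    | _, _ => False)

/-- The graph obtained by joining the vertex `u` of `H` to the pendant vertex of
`U_{r,g}^l` by an edge. -/
def joinPendant {V : Type*} (H : SimpleGraph V) (u : V) (r g : ℕ) :
    SimpleGraph (V ⊕ (Fin (r - g) ⊕ Fin g)) :=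
  SimpleGraph.fromRel (fun p q =>
    match p, q with
    | .inl x, .inl y => H.Adj x y
    | .inl x, .inr (.inl i) => x = u ∧ i.val = 0
    | .inr a, .inr b => (UnlGraph r g).Adj a b
    | _, _ => False)

/-- `C_{m1,m2}^n` in the case `n = m1 + m2 - 1`: two cycles `C_{m1}` and `C_{m2}`
sharing exactly one vertex (the vertex `0`). -/
def twoCyclesGlued (m1 m2 : ℕ) : SimpleGraph (Fin (m1 + m2 - 1)) :=
  SimpleGraph.fromRel (fun i j =>
    (i.val + 1 = j.val ∧ j.val < m1) ∨ (i.val = 0 ∧ j.val + 1 = m1)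
    ∨ (i.val = 0 ∧ j.val = m1) ∨ (m1 ≤ i.val ∧ i.val + 1 = j.val)
    ∨ (i.val = 0 ∧ j.val + 2 = m1 + m2))

/-- `C_{3,3}^n` for `n > 5`: two triangles `{0,1,2}` and `{n-3,n-2,n-1}` joined by the path
`2, 3, …, n-3` (a path on `n - 4` vertices whose ends are identified with a vertex of each
triangle). -/
def C33 (n : ℕ) : SimpleGraph (Fin n) :=
  SimpleGraph.fromRel (fun i j =>
    (i.val = 0 ∧ j.val = 1) ∨ (i.val = 0 ∧ j.val = 2) ∨ (i.val = 1 ∧ j.val = 2)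
    ∨ (2 ≤ i.val ∧ i.val + 1 = j.val ∧ j.val + 3 ≤ n)
    ∨ (i.val + 3 = n ∧ j.val + 2 = n) ∨ (i.val + 2 = n ∧ j.val + 1 = n)
    ∨ (i.val + 3 = n ∧ j.val + 1 = n))

/-- `T(l, m, d)`: the tree obtained from the path `P_d` by attaching `l` pendant vertices at
one end and `m` pendant vertices at the other end. -/
def Tlmd (l m d : ℕ) : SimpleGraph (Fin d ⊕ (Fin l ⊕ Fin m)) :=
  SimpleGraph.fromRel (fun p q =>
    match p, q with
    | .inl i, .inl j => i.val + 1 = j.val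
    | .inl i, .inr (.inl _) => i.val = 0
    | .inl i, .inr (.inr _) => i.val + 1 = d
    | _, _ => False)

/-- `K_m^n(l_1, …, l_m)`: the graph obtained from the complete graph `K_m` by identifying,
for each `i`, one end vertex of a path on `l i` vertices with the `i`-th vertex of `K_m`.
The vertex `⟨i, 0⟩` is the `i`-th vertex of the complete graph. -/
def Kmn (m : ℕ) (l : Fin m → ℕ) : SimpleGraph ((i : Fin m) × Fin (l i)) :=
  SimpleGraph.fromRel (fun p q =>
    (p.1 = q.1 ∧ p.2.val + 1 = q.2.val) ∨ (p.1 ≠ q.1 ∧ p.2.val = 0 ∧ q.2.val = 0))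

/-- The graph obtained from `H`, `C_{m1}` and `C_{m2}` by identifying the vertex `w` of `H`,
a vertex of `C_{m1}` and a vertex of `C_{m2}` into one vertex. -/
def glueTwoCycles {V : Type*} (H : SimpleGraph V) (w : V) (m1 m2 : ℕ) :
    SimpleGraph (V ⊕ (Fin (m1 - 1) ⊕ Fin (m2 - 1))) :=
  SimpleGraph.fromRel (fun p q =>
    match p, q with
    | .inl x, .inl y => H.Adj x y
    | .inl x, .inr (.inl i) => x = w ∧ (i.val = 0 ∨ i.val + 2 = m1)
    | .inl x, .inr (.inr i) => x = w ∧ (i.val = 0 ∨ i.val + 2 = m2)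
    | .inr (.inl i), .inr (.inl j) => i.val + 1 = j.val
    | .inr (.inr i), .inr (.inr j) => i.val + 1 = j.val
    | _, _ => False)

/-- The graph obtained from `H` and the cycle `C_M` by identifying the vertex `w` of `H`
with one vertex of the cycle. -/
def glueOneCycle {V : Type*} (H : SimpleGraph V) (w : V) (M : ℕ) :
    SimpleGraph (V ⊕ Fin (M - 1)) :=
  SimpleGraph.fromRel (fun p q =>
    match p, q with
    | .inl x, .inl y => H.Adj x y
    | .inl x, .inr i => x = w ∧ (i.val = 0 ∨ i.val + 2 = M)
    | .inr i, .inr j => i.val + 1 = j.val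
    | _, _ => False)

section aux
variable {V : Type*}

lemma dist_le_potential (G : SimpleGraph V) (W : V → ℕ)
    (hW : ∀ a b, G.Adj a b → W a ≤ W b + 1) {x y : V} (h : G.Reachable x y) :
    W x ≤ W y + G.dist x y := by
  obtain ⟨p, hp⟩ := h.exists_walk_length_eq_dist
  rw [← hp]; clear hp h
  induction p with
  | nil => simp
  | cons hadj q ih =>
    have := hW _ _ hadj
    simp only [SimpleGraph.Walk.length_cons]
    omega

lemma ecc_le {G : SimpleGraph V} [Nonempty V] {v : V} {b : ℕ}
    (h : ∀ y, G.dist v y ≤ b) : ecc G v ≤ b := ciSup_le h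

lemma le_ecc {G : SimpleGraph V} [Finite V] (v y : V) : G.dist v y ≤ ecc G v :=
  le_ciSup (Set.Finite.bddAbove (Set.finite_range _)) y

lemma dist_le_of_adj {G : SimpleGraph V} {a b : V} (h : G.Adj a b) : G.dist a b ≤ 1 :=
  SimpleGraph.dist_le h.toWalk

lemma dist_le_dist_of_hom {W' : Type*} {G : SimpleGraph V} {G' : SimpleGraph W'}
    (f : G →g G') {x y : V} (h : G.Reachable x y) :
    G'.dist (f x) (f y) ≤ G.dist x y := by
  obtain ⟨p, hp⟩ := h.exists_walk_length_eq_dist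
  calc G'.dist (f x) (f y) ≤ (p.map f).length := SimpleGraph.dist_le _
  _ = p.length := p.length_map f
  _ = _ := hp

end aux
section JP
variable {V : Type*} {H : SimpleGraph V} {u : V} {r g : ℕ}

lemma jp_adjHH {x y : V} (h : H.Adj x y) :
    (joinPendant H u r g).Adj (.inl x) (.inl y) := by
  simp only [joinPendant, fromRel_adj]
  exact ⟨by simpa using h.ne, Or.inl h⟩

lemma jp_adjUP0 (h0 : 0 < r - g) :
    (joinPendant H u r g).Adj (.inl u) (.inr (.inl ⟨0, h0⟩)) := by
  simp [joinPendant, UnlGraph, fromRel_adj]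

lemma jp_adjPP {n : ℕ} (hn : n + 1 < r - g) :
    (joinPendant H u r g).Adj (.inr (.inl ⟨n, by omega⟩)) (.inr (.inl ⟨n + 1, hn⟩)) := by
  simp [joinPendant, UnlGraph, fromRel_adj, Fin.ext_iff]

lemma jp_adjPC0 (h0 : 0 < r - g) (hg : 0 < g) :
    (joinPendant H u r g).Adj (.inr (.inl ⟨r - g - 1, by omega⟩)) (.inr (.inr ⟨0, hg⟩)) := by
  simp [joinPendant, UnlGraph, fromRel_adj, Fin.ext_iff]
  omega

lemma jp_adjCC {n : ℕ} (hn : n + 1 < g) :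
    (joinPendant H u r g).Adj (.inr (.inr ⟨n, by omega⟩)) (.inr (.inr ⟨n + 1, hn⟩)) := by
  simp [joinPendant, UnlGraph, fromRel_adj, Fin.ext_iff]

lemma jp_adjC0top (hg : 2 ≤ g) :
    (joinPendant H u r g).Adj (.inr (.inr ⟨0, by omega⟩)) (.inr (.inr ⟨g - 1, by omega⟩)) := by
  simp [joinPendant, UnlGraph, fromRel_adj, Fin.ext_iff]
  omega

def jp_hom : H →g (joinPendant H u r g) :=
  ⟨Sum.inl, fun h => jp_adjHH h⟩

variable (hg : 3 ≤ g) (hgr : g < r)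
include hg hgr

omit hg hgr in
lemma jp_reachP : ∀ n (hn : n < r - g),
    (joinPendant H u r g).Reachable (.inl u) (.inr (.inl ⟨n, hn⟩)) := by
  intro n
  induction n with
  | zero => exact fun hn => (jp_adjUP0 hn).reachable
  | succ m ih => exact fun hn => (ih (by omega)).trans (jp_adjPP hn).reachable

lemma jp_reachC : ∀ n (hn : n < g),
    (joinPendant H u r g).Reachable (.inl u) (.inr (.inr ⟨n, hn⟩)) := by
  have h0 : ∀ (hn : (0:ℕ) < g), (joinPendant H u r g).Reachable (.inl u) (.inr (.inr ⟨0, hn⟩)) := by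
    intro hn
    exact (jp_reachP (r - g - 1) (by omega)).trans
      (jp_adjPC0 (by omega) hn).reachable
  intro n
  induction n with
  | zero => exact h0
  | succ m ih => exact fun hn => (ih (by omega)).trans (jp_adjCC hn).reachable

lemma jp_conn (hH : H.Connected) : (joinPendant H u r g).Connected := by
  have reach : ∀ v, (joinPendant H u r g).Reachable (.inl u) v := by
    rintro (x | (⟨n, hn⟩ | ⟨n, hn⟩))
    · exact (hH u x).map jp_hom
    · exact jp_reachP n hn
    · exact jp_reachC hg hgr n hn
  have : Nonempty (V ⊕ (Fin (r - g) ⊕ Fin g)) := ⟨.inl u⟩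
  exact ⟨fun a b => (reach a).symm.trans (reach b)⟩

end JP
section JPdist
variable {V : Type*} {H : SimpleGraph V} {u : V} {r g : ℕ}
variable (hH : H.Connected) (hg : 3 ≤ g) (hgr : g < r)
include hH hg hgr

lemma jp_dHH (x y : V) :
    (joinPendant H u r g).dist (.inl x) (.inl y) ≤ H.dist x y :=
  dist_le_dist_of_hom (jp_hom (u := u) (r := r) (g := g)) (hH x y)

lemma jp_dP : ∀ n (hn : n < r - g),
    (joinPendant H u r g).dist (.inl u) (.inr (.inl ⟨n, hn⟩)) ≤ n + 1 := by
  intro n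
  induction n with
  | zero => exact fun hn => dist_le_of_adj (jp_adjUP0 hn)
  | succ m ih =>
    intro hn
    calc (joinPendant H u r g).dist (.inl u) (.inr (.inl ⟨m + 1, hn⟩))
        ≤ (joinPendant H u r g).dist (.inl u) (.inr (.inl ⟨m, by omega⟩))
          + (joinPendant H u r g).dist (.inr (.inl ⟨m, by omega⟩)) (.inr (.inl ⟨m + 1, hn⟩)) :=
          (jp_conn hg hgr hH).dist_triangle
      _ ≤ (m + 1) + 1 := Nat.add_le_add (ih (by omega)) (dist_le_of_adj (jp_adjPP hn))

lemma jp_dPfwd : ∀ k n m (hn : n < r - g) (hm : m < r - g), n + k = m →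
    (joinPendant H u r g).dist (.inr (.inl ⟨n, hn⟩)) (.inr (.inl ⟨m, hm⟩)) ≤ k := by
  intro k
  induction k with
  | zero =>
    intro n m hn hm hnm
    have : n = m := by omega
    subst this
    simp
  | succ j ih =>
    intro n m hn hm hnm
    calc (joinPendant H u r g).dist (.inr (.inl ⟨n, hn⟩)) (.inr (.inl ⟨m, hm⟩))
        ≤ (joinPendant H u r g).dist (.inr (.inl ⟨n, hn⟩)) (.inr (.inl ⟨m - 1, by omega⟩))
          + (joinPendant H u r g).dist (.inr (.inl ⟨m - 1, by omega⟩)) (.inr (.inl ⟨m, hm⟩)) :=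
          (jp_conn hg hgr hH).dist_triangle
      _ ≤ j + 1 := by
          have h1 : (joinPendant H u r g).dist (.inr (.inl ⟨m - 1, by omega⟩)) (.inr (.inl ⟨m, hm⟩)) ≤ 1 := by
            have hm1 : (m - 1) + 1 < r - g := by omega
            have := dist_le_of_adj (jp_adjPP (H := H) (u := u) hm1)
            have he : (⟨m - 1 + 1, hm1⟩ : Fin (r - g)) = ⟨m, hm⟩ := by
              simp [Fin.ext_iff]; omega
            rwa [he] at this
          exact Nat.add_le_add (ih n (m - 1) hn (by omega) (by omega)) h1

lemma jp_dCfwd : ∀ k n m (hn : n < g) (hm : m < g), n + k = m →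
    (joinPendant H u r g).dist (.inr (.inr ⟨n, hn⟩)) (.inr (.inr ⟨m, hm⟩)) ≤ k := by
  intro k
  induction k with
  | zero =>
    intro n m hn hm hnm
    have : n = m := by omega
    subst this
    simp
  | succ j ih =>
    intro n m hn hm hnm
    calc (joinPendant H u r g).dist (.inr (.inr ⟨n, hn⟩)) (.inr (.inr ⟨m, hm⟩))
        ≤ (joinPendant H u r g).dist (.inr (.inr ⟨n, hn⟩)) (.inr (.inr ⟨m - 1, by omega⟩))
          + (joinPendant H u r g).dist (.inr (.inr ⟨m - 1, by omega⟩)) (.inr (.inr ⟨m, hm⟩)) :=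
          (jp_conn hg hgr hH).dist_triangle
      _ ≤ j + 1 := by
          have h1 : (joinPendant H u r g).dist (.inr (.inr ⟨m - 1, by omega⟩)) (.inr (.inr ⟨m, hm⟩)) ≤ 1 := by
            have hm1 : (m - 1) + 1 < g := by omega
            have := dist_le_of_adj (jp_adjCC (H := H) (u := u) (r := r) hm1)
            have he : (⟨m - 1 + 1, hm1⟩ : Fin g) = ⟨m, hm⟩ := by
              simp [Fin.ext_iff]; omega
            rwa [he] at this
          exact Nat.add_le_add (ih n (m - 1) hn (by omega) (by omega)) h1

lemma jp_dC0 : ∀ n (hn : n < g),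
    (joinPendant H u r g).dist (.inr (.inr ⟨0, by omega⟩)) (.inr (.inr ⟨n, hn⟩)) ≤ min n (g - n) := by
  intro n hn
  rcases le_or_gt n (g - n) with hle | hlt
  · simpa [Nat.min_eq_left hle] using jp_dCfwd hH hg hgr n 0 n (by omega) hn (by omega)
  · rw [Nat.min_eq_right (by omega)]
    calc (joinPendant H u r g).dist (.inr (.inr ⟨0, by omega⟩)) (.inr (.inr ⟨n, hn⟩))
        ≤ (joinPendant H u r g).dist (.inr (.inr ⟨0, by omega⟩)) (.inr (.inr ⟨g - 1, by omega⟩))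
          + (joinPendant H u r g).dist (.inr (.inr ⟨g - 1, by omega⟩)) (.inr (.inr ⟨n, hn⟩)) :=
          (jp_conn hg hgr hH).dist_triangle
      _ ≤ 1 + (g - 1 - n) := by
          refine Nat.add_le_add (dist_le_of_adj (jp_adjC0top (by omega))) ?_
          rw [SimpleGraph.dist_comm]
          exact jp_dCfwd hH hg hgr (g - 1 - n) n (g - 1) hn (by omega) (by omega)
      _ ≤ g - n := by omega

lemma jp_dCC (n m : ℕ) (hn : n < g) (hm : m < g) :
    (joinPendant H u r g).dist (.inr (.inr ⟨n, hn⟩)) (.inr (.inr ⟨m, hm⟩)) ≤ g / 2 := by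
  -- wlog n ≤ m
  rcases le_or_gt n m with h | h
  case _ =>
    rcases le_or_gt (m - n) (g / 2) with h2 | h2
    · exact le_trans (jp_dCfwd hH hg hgr (m - n) n m hn hm (by omega)) h2
    · -- go n → 0 → (wrap) → m : length n + (g - m)
      calc (joinPendant H u r g).dist (.inr (.inr ⟨n, hn⟩)) (.inr (.inr ⟨m, hm⟩))
          ≤ (joinPendant H u r g).dist (.inr (.inr ⟨n, hn⟩)) (.inr (.inr ⟨0, by omega⟩))
            + (joinPendant H u r g).dist (.inr (.inr ⟨0, by omega⟩)) (.inr (.inr ⟨m, hm⟩)) :=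
            (jp_conn hg hgr hH).dist_triangle
        _ ≤ n + min m (g - m) := by
            refine Nat.add_le_add ?_ (jp_dC0 hH hg hgr m hm)
            rw [SimpleGraph.dist_comm]
            exact jp_dCfwd hH hg hgr n 0 n (by omega) hn (by omega)
        _ ≤ g / 2 := by omega
  case _ =>
    rw [SimpleGraph.dist_comm]
    rcases le_or_gt (n - m) (g / 2) with h2 | h2
    · exact le_trans (jp_dCfwd hH hg hgr (n - m) m n hm hn (by omega)) h2
    · calc (joinPendant H u r g).dist (.inr (.inr ⟨m, hm⟩)) (.inr (.inr ⟨n, hn⟩))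
          ≤ (joinPendant H u r g).dist (.inr (.inr ⟨m, hm⟩)) (.inr (.inr ⟨0, by omega⟩))
            + (joinPendant H u r g).dist (.inr (.inr ⟨0, by omega⟩)) (.inr (.inr ⟨n, hn⟩)) :=
            (jp_conn hg hgr hH).dist_triangle
        _ ≤ m + min n (g - n) := by
            refine Nat.add_le_add ?_ (jp_dC0 hH hg hgr n hn)
            rw [SimpleGraph.dist_comm]
            exact jp_dCfwd hH hg hgr m 0 m (by omega) hm (by omega)
        _ ≤ g / 2 := by omega

lemma jp_duC (n : ℕ) (hn : n < g) :
    (joinPendant H u r g).dist (.inl u) (.inr (.inr ⟨n, hn⟩)) ≤ r - g + 1 + min n (g - n) := by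
  calc (joinPendant H u r g).dist (.inl u) (.inr (.inr ⟨n, hn⟩))
      ≤ (joinPendant H u r g).dist (.inl u) (.inr (.inr ⟨0, by omega⟩))
        + (joinPendant H u r g).dist (.inr (.inr ⟨0, by omega⟩)) (.inr (.inr ⟨n, hn⟩)) :=
        (jp_conn hg hgr hH).dist_triangle
    _ ≤ (r - g + 1) + min n (g - n) := by
        refine Nat.add_le_add ?_ (jp_dC0 hH hg hgr n hn)
        calc (joinPendant H u r g).dist (.inl u) (.inr (.inr ⟨0, by omega⟩))
            ≤ (joinPendant H u r g).dist (.inl u) (.inr (.inl ⟨r - g - 1, by omega⟩))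
              + (joinPendant H u r g).dist (.inr (.inl ⟨r - g - 1, by omega⟩)) (.inr (.inr ⟨0, by omega⟩)) :=
              (jp_conn hg hgr hH).dist_triangle
          _ ≤ (r - g - 1 + 1) + 1 :=
              Nat.add_le_add (jp_dP hH hg hgr (r - g - 1) (by omega))
                (dist_le_of_adj (jp_adjPC0 (by omega) (by omega)))
          _ ≤ r - g + 1 := by omega

lemma jp_dPC (n : ℕ) (hn : n < r - g) (m : ℕ) (hm : m < g) :
    (joinPendant H u r g).dist (.inr (.inl ⟨n, hn⟩)) (.inr (.inr ⟨m, hm⟩))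
      ≤ (r - g - n) + min m (g - m) := by
  calc (joinPendant H u r g).dist (.inr (.inl ⟨n, hn⟩)) (.inr (.inr ⟨m, hm⟩))
      ≤ (joinPendant H u r g).dist (.inr (.inl ⟨n, hn⟩)) (.inr (.inl ⟨r - g - 1, by omega⟩))
        + (joinPendant H u r g).dist (.inr (.inl ⟨r - g - 1, by omega⟩)) (.inr (.inr ⟨m, hm⟩)) :=
        (jp_conn hg hgr hH).dist_triangle
    _ ≤ (r - g - 1 - n) + (1 + min m (g - m)) := by
        refine Nat.add_le_add (jp_dPfwd hH hg hgr (r - g - 1 - n) n (r - g - 1) hn (by omega) (by omega)) ?_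
        calc (joinPendant H u r g).dist (.inr (.inl ⟨r - g - 1, by omega⟩)) (.inr (.inr ⟨m, hm⟩))
            ≤ (joinPendant H u r g).dist (.inr (.inl ⟨r - g - 1, by omega⟩)) (.inr (.inr ⟨0, by omega⟩))
              + (joinPendant H u r g).dist (.inr (.inr ⟨0, by omega⟩)) (.inr (.inr ⟨m, hm⟩)) :=
              (jp_conn hg hgr hH).dist_triangle
          _ ≤ 1 + min m (g - m) :=
              Nat.add_le_add (dist_le_of_adj (jp_adjPC0 (by omega) (by omega))) (jp_dC0 hH hg hgr m hm)
    _ ≤ (r - g - n) + min m (g - m) := by omega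

end JPdist
section JPecc
variable {V : Type*} [Fintype V] {H : SimpleGraph V} {u : V} {r g : ℕ}
variable (hH : H.Connected) (hg : 3 ≤ g) (hgr : g < r)
include hH hg hgr

lemma jp_eccH (x : V) :
    ecc (joinPendant H u r g) (.inl x)
      ≤ max (ecc H x) (H.dist x u + (r - g) + 1 + g / 2) := by
  haveI : Nonempty (V ⊕ (Fin (r - g) ⊕ Fin g)) := ⟨.inl u⟩
  refine ecc_le ?_
  rintro (y | (⟨n, hn⟩ | ⟨n, hn⟩))
  · exact le_trans (jp_dHH (u := u) hH hg hgr x y) (le_trans (le_ecc x y) (le_max_left _ _))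
  · refine le_trans ((jp_conn hg hgr hH).dist_triangle (v := .inl u)) ?_
    have h1 := jp_dHH (u := u) hH hg hgr x u
    have h2 := jp_dP (u := u) hH hg hgr n hn
    refine le_trans (Nat.add_le_add h1 h2) (le_trans ?_ (le_max_right _ _))
    omega
  · refine le_trans ((jp_conn hg hgr hH).dist_triangle (v := .inl u)) ?_
    have h1 := jp_dHH (u := u) hH hg hgr x u
    have h2 := jp_duC (u := u) hH hg hgr n hn
    refine le_trans (Nat.add_le_add h1 h2) (le_trans ?_ (le_max_right _ _))
    omega

lemma jp_eccP (n : ℕ) (hn : n < r - g) :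
    ecc (joinPendant H u r g) (.inr (.inl ⟨n, hn⟩))
      ≤ max (ecc H u + n + 1) ((r - g) - n + g / 2) := by
  haveI : Nonempty (V ⊕ (Fin (r - g) ⊕ Fin g)) := ⟨.inl u⟩
  refine ecc_le ?_
  rintro (y | (⟨m, hm⟩ | ⟨m, hm⟩))
  · refine le_trans ((jp_conn hg hgr hH).dist_triangle (v := .inl u)) ?_
    have h1 : (joinPendant H u r g).dist (.inr (.inl ⟨n, hn⟩)) (.inl u) ≤ n + 1 := by
      rw [SimpleGraph.dist_comm]; exact jp_dP (u := u) hH hg hgr n hn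
    have h2 : (joinPendant H u r g).dist (.inl u) (.inl y) ≤ ecc H u :=
      le_trans (jp_dHH (u := u) hH hg hgr u y) (le_ecc u y)
    refine le_trans (Nat.add_le_add h1 h2) (le_trans ?_ (le_max_left _ _))
    omega
  · rcases le_or_gt n m with h | h
    · refine le_trans (jp_dPfwd hH hg hgr (m - n) n m hn hm (by omega)) ?_
      refine le_trans ?_ (le_max_right _ _)
      omega
    · rw [SimpleGraph.dist_comm]
      refine le_trans (jp_dPfwd hH hg hgr (n - m) m n hm hn (by omega)) ?_
      refine le_trans ?_ (le_max_left _ _)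
      omega
  · refine le_trans (jp_dPC hH hg hgr n hn m hm) ?_
    refine le_trans ?_ (le_max_right _ _)
    have : min m (g - m) ≤ g / 2 := by omega
    omega

lemma jp_eccC (n : ℕ) (hn : n < g) :
    ecc (joinPendant H u r g) (.inr (.inr ⟨n, hn⟩))
      ≤ max (ecc H u + ((r - g) + 1 + min n (g - n))) (g / 2) := by
  haveI : Nonempty (V ⊕ (Fin (r - g) ⊕ Fin g)) := ⟨.inl u⟩
  refine ecc_le ?_
  rintro (y | (⟨m, hm⟩ | ⟨m, hm⟩))
  · refine le_trans ((jp_conn hg hgr hH).dist_triangle (v := .inl u)) ?_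
    have h1 : (joinPendant H u r g).dist (.inr (.inr ⟨n, hn⟩)) (.inl u)
        ≤ r - g + 1 + min n (g - n) := by
      rw [SimpleGraph.dist_comm]; exact jp_duC (u := u) hH hg hgr n hn
    have h2 : (joinPendant H u r g).dist (.inl u) (.inl y) ≤ ecc H u :=
      le_trans (jp_dHH (u := u) hH hg hgr u y) (le_ecc u y)
    refine le_trans (Nat.add_le_add h1 h2) (le_trans ?_ (le_max_left _ _))
    omega
  · rw [SimpleGraph.dist_comm]
    refine le_trans (jp_dPC hH hg hgr m hm n hn) (le_trans ?_ (le_max_left _ _))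
    omega
  · exact le_trans (jp_dCC hH hg hgr n m hn hm) (le_max_right _ _)

end JPecc
section G3
variable {V : Type*} [Fintype V] {H : SimpleGraph V} {u : V} {r : ℕ}

lemma Hstep (hH : H.Connected) {x y w : V} (hxy : H.Adj x y) :
    H.dist x w ≤ H.dist y w + 1 := by
  have h1 := hH.dist_triangle (u := x) (v := y) (w := w)
  have h2 := dist_le_of_adj hxy
  omega

variable (hH : H.Connected) (hr : 5 ≤ r)
include hH hr

/-- distance to a fixed `H`-vertex is at least this potential -/
lemma g3_low_far (w : V) :
    ∀ v, (Sum.elim (fun x => H.dist x w)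
        (Sum.elim (fun i : Fin (r - 3) => H.dist u w + i.val + 1)
          (fun t : Fin 3 => H.dist u w + (r - 2) + min t.val 1)) v)
      ≤ (joinPendant H u r 3).dist v (.inl w) := by
  intro v
  have key := dist_le_potential (joinPendant H u r 3)
    (Sum.elim (fun x => H.dist x w)
        (Sum.elim (fun i : Fin (r - 3) => H.dist u w + i.val + 1)
          (fun t : Fin 3 => H.dist u w + (r - 2) + min t.val 1)))
    ?_ (x := v) (y := .inl w) ((jp_conn (by omega) (by omega) hH) v (.inl w))
  · simpa [SimpleGraph.dist_self] using key
  · rintro (x | (i | t)) (y | (j | s)) hab <;>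
      simp only [joinPendant, UnlGraph, fromRel_adj, Sum.inr.injEq, Sum.inl.injEq, ne_eq,
        not_false_eq_true, true_and, reduceCtorEq, Fin.ext_iff] at hab <;>
      simp only [Sum.elim_inl, Sum.elim_inr]
    · have hxy : H.Adj x y := by
        rcases hab.2 with h | h
        · exact h
        · exact h.symm
      exact Hstep hH hxy
    · have : x = u ∧ (j : ℕ) = 0 := by tauto
      rcases this with ⟨hx, hj⟩
      subst hx
      omega
    · exact absurd hab (by simp)
    · have : y = u ∧ (i : ℕ) = 0 := by tauto
      rcases this with ⟨hy, hi⟩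
      subst hy
      omega
    · omega
    · have : (i : ℕ) + 1 = r - 3 ∧ (s : ℕ) = 0 := by tauto
      omega
    · exact absurd hab (by simp)
    · have : (j : ℕ) + 1 = r - 3 ∧ (t : ℕ) = 0 := by tauto
      omega
    · omega

/-- distance to the cycle vertex `1` is at least this potential -/
lemma g3_low_tri :
    ∀ v, (Sum.elim (fun x => H.dist x u + (r - 1))
        (Sum.elim (fun i : Fin (r - 3) => r - 2 - i.val)
          (fun t : Fin 3 => 1 - min t.val (2 - t.val))) v)
      ≤ (joinPendant H u r 3).dist v (.inr (.inr ⟨1, by omega⟩)) := by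
  intro v
  have key := dist_le_potential (joinPendant H u r 3)
    (Sum.elim (fun x => H.dist x u + (r - 1))
        (Sum.elim (fun i : Fin (r - 3) => r - 2 - i.val)
          (fun t : Fin 3 => 1 - min t.val (2 - t.val))))
    ?_ (x := v) (y := .inr (.inr ⟨1, by omega⟩))
    ((jp_conn (by omega) (by omega) hH) v (.inr (.inr ⟨1, by omega⟩)))
  · simpa using key
  · rintro (x | (i | t)) (y | (j | s)) hab <;>
      simp only [joinPendant, UnlGraph, fromRel_adj, Sum.inr.injEq, Sum.inl.injEq, ne_eq,
        not_false_eq_true, true_and, reduceCtorEq, Fin.ext_iff] at hab <;>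
      simp only [Sum.elim_inl, Sum.elim_inr]
    · have hxy : H.Adj x y := by
        rcases hab.2 with h | h
        · exact h
        · exact h.symm
      have := Hstep hH (w := u) hxy
      omega
    · have : x = u ∧ (j : ℕ) = 0 := by tauto
      rcases this with ⟨hx, hj⟩
      subst hx
      simp [SimpleGraph.dist_self]
      omega
    · exact absurd hab (by simp)
    · have : y = u ∧ (i : ℕ) = 0 := by tauto
      rcases this with ⟨hy, hi⟩
      subst hy
      simp [SimpleGraph.dist_self]
      omega
    · have hi := i.isLt
      have hj := j.isLt
      omega
    · have : (i : ℕ) + 1 = r - 3 ∧ (s : ℕ) = 0 := by tauto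
      have hi := i.isLt
      omega
    · exact absurd hab (by simp)
    · have : (j : ℕ) + 1 = r - 3 ∧ (t : ℕ) = 0 := by tauto
      have hj := j.isLt
      omega
    · have ht := t.isLt
      have hs := s.isLt
      omega

end G3
section Main

/-- unrolling position of cycle vertex `j` -/
def ppv (g j : ℕ) : ℕ := if 2 * j ≤ g then 2 * j - 1 else 2 * (g - j)

lemma ppv_le (g j : ℕ) (hj : j < g) (hg : 1 ≤ g) : ppv g j ≤ g - 1 := by
  unfold ppv; split <;> omega

lemma ppv_inj {g : ℕ} (hg : 4 ≤ g) {j j' : ℕ} (hj : j < g) (hj' : j' < g)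
    (h : ppv g j = ppv g j') : j = j' := by
  unfold ppv at h; split at h <;> split at h <;> omega

lemma ppv_ge_min (g j : ℕ) (hj : j < g) : min j (g - j) ≤ ppv g j := by
  unfold ppv; split <;> omega

def phiC (r g : ℕ) (hg : 4 ≤ g) (hrg : g < r) (j : Fin g) : Fin (r - 3) ⊕ Fin 3 :=
  if h : ppv g j.val ≤ g - 4 then .inl ⟨r - g + ppv g j.val, by omega⟩
  else .inr ⟨ppv g j.val - (g - 3), by
    have h2 := ppv_le g j.val j.isLt (by omega); omega⟩

def phi (V : Type*) (r g : ℕ) (hg : 4 ≤ g) (hrg : g < r) :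
    (V ⊕ (Fin (r - g) ⊕ Fin g)) → (V ⊕ (Fin (r - 3) ⊕ Fin 3)) := fun v =>
  match v with
  | .inl x => .inl x
  | .inr (.inl i) => .inr (.inl ⟨i.val, by have := i.isLt; omega⟩)
  | .inr (.inr j) => .inr (phiC r g hg hrg j)

lemma phi_inj (V : Type*) (r g : ℕ) (hg : 4 ≤ g) (hrg : g < r) :
    Function.Injective (phi V r g hg hrg) := by
  have hC : ∀ j j' : Fin g, phiC r g hg hrg j = phiC r g hg hrg j' → j = j' := by
    intro j j' h
    unfold phiC at h
    split at h <;> split at h <;> simp [Fin.ext_iff] at h ⊢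
    · exact ppv_inj hg j.isLt j'.isLt (by omega)
    · have e1 := ppv_le g j.val j.isLt (by omega)
      have e2 := ppv_le g j'.val j'.isLt (by omega)
      exact ppv_inj hg j.isLt j'.isLt (by omega)
  have hCP : ∀ (j : Fin g) (i : Fin (r - g)),
      phiC r g hg hrg j ≠ .inl ⟨i.val, by have := i.isLt; omega⟩ := by
    intro j i
    unfold phiC
    split
    · simp only [ne_eq, Sum.inl.injEq, Fin.ext_iff]
      have := i.isLt
      omega
    · simp
  rintro (x | (i | t)) (y | (j | s)) h <;> simp only [phi] at h
  · simpa using h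
  · exact absurd h (by simp)
  · exact absurd h (by simp)
  · exact absurd h (by simp)
  · simp only [Sum.inr.injEq, Sum.inl.injEq, Fin.ext_iff] at h
    simp [Fin.ext_iff]
    exact h
  · exfalso
    exact hCP s i (by simpa using h.symm)
  · exact absurd h (by simp)
  · exfalso
    exact hCP t j (by simpa using h)
  · simp only [Sum.inr.injEq] at h
    exact congrArg Sum.inr (congrArg Sum.inr (hC t s h))

end Main

-- STATEMENT 5
theorem stmt5 {V : Type*} [Fintype V] (H : SimpleGraph V) (hH : H.Connected)
    (hV : 2 ≤ Fintype.card V) (u : V) (r g : ℕ) (hg : 4 ≤ g) (hrg : g < r) :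
    totalEcc (joinPendant H u r g) < totalEcc (joinPendant H u r 3) := by
  have hg3 : 3 ≤ g := by omega
  have hr5 : 5 ≤ r := by omega
  have h3r : (3 : ℕ) < r := by omega
  haveI : Nonempty V := Fintype.card_pos_iff.mp (by omega)
  obtain ⟨w0, hw0⟩ := Finite.exists_max (fun y => H.dist u y)
  have hDval : ecc H u = H.dist u w0 := le_antisymm (ecc_le hw0) (le_ecc u w0)
  have hD1 : 1 ≤ ecc H u := by
    obtain ⟨y, hy⟩ := Fintype.exists_ne_of_one_lt_card (by omega) u
    exact le_trans (hH.pos_dist_of_ne (Ne.symm hy)) (le_ecc u y)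
  have lowFar := g3_low_far (u := u) hH hr5 w0
  have lowTri := g3_low_tri (u := u) hH hr5
  -- lower bounds on eccentricities in the g = 3 graph
  have lowH : ∀ x : V, max (ecc H x) (H.dist x u + (r - 1))
      ≤ ecc (joinPendant H u r 3) (.inl x) := by
    intro x
    refine max_le ?_ ?_
    · refine ecc_le (fun y => ?_)
      have h1 := g3_low_far (u := u) hH hr5 y (.inl x)
      simp only [Sum.elim_inl] at h1
      exact le_trans h1 (le_ecc (G := joinPendant H u r 3) (Sum.inl x) (Sum.inl y))
    · have h2 := lowTri (.inl x)
      simp only [Sum.elim_inl] at h2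
      exact le_trans h2 (le_ecc (G := joinPendant H u r 3) (Sum.inl x) _)
  have lowP : ∀ (n : ℕ) (hn : n < r - 3), max (ecc H u + n + 1) (r - 2 - n)
      ≤ ecc (joinPendant H u r 3) (.inr (.inl ⟨n, hn⟩)) := by
    intro n hn
    refine max_le ?_ ?_
    · have h1 := lowFar (.inr (.inl ⟨n, hn⟩))
      simp only [Sum.elim_inr, Sum.elim_inl, Fin.val_mk] at h1
      rw [hDval]
      exact le_trans h1 (le_ecc (G := joinPendant H u r 3) (Sum.inr (Sum.inl ⟨n, hn⟩)) (Sum.inl w0))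
    · have h2 := lowTri (.inr (.inl ⟨n, hn⟩))
      simp only [Sum.elim_inr, Sum.elim_inl, Fin.val_mk] at h2
      exact le_trans h2 (le_ecc (G := joinPendant H u r 3) (Sum.inr (Sum.inl ⟨n, hn⟩)) _)
  have lowC : ∀ (t : ℕ) (ht : t < 3), ecc H u + (r - 2) + min t 1
      ≤ ecc (joinPendant H u r 3) (.inr (.inr ⟨t, ht⟩)) := by
    intro t ht
    have h1 := lowFar (.inr (.inr ⟨t, ht⟩))
    simp only [Sum.elim_inr, Fin.val_mk] at h1
    rw [hDval]
    exact le_trans h1 (le_ecc (G := joinPendant H u r 3) (Sum.inr (Sum.inr ⟨t, ht⟩)) (Sum.inl w0))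
  -- pointwise comparison
  have hle : ∀ v, ecc (joinPendant H u r g) v
      ≤ ecc (joinPendant H u r 3) (phi V r g hg hrg v) := by
    rintro (x | (⟨n, hn⟩ | ⟨n, hn⟩))
    · simp only [phi]
      refine le_trans (jp_eccH hH hg3 hrg x) (le_trans ?_ (lowH x))
      exact max_le_max le_rfl (by omega)
    · simp only [phi]
      refine le_trans (jp_eccP hH hg3 hrg n hn) (le_trans ?_ (lowP n (by omega)))
      refine max_le (le_max_left _ _) (le_trans ?_ (le_max_right _ _))
      omega
    · simp only [phi]
      refine le_trans (jp_eccC hH hg3 hrg n hn) ?_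
      unfold phiC
      split
      case isTrue h =>
        have h' : ppv g n ≤ g - 4 := h
        have hm := ppv_ge_min g n hn
        refine le_trans ?_ (lowP (r - g + ppv g n) (by omega))
        omega
      case isFalse h =>
        have h' : ¬ ppv g n ≤ g - 4 := h
        have hple := ppv_le g n hn (by omega)
        have hm := ppv_ge_min g n hn
        refine le_trans ?_ (lowC (ppv g n - (g - 3)) (by omega))
        omega
  -- strict inequality at the cycle vertex g - 1
  have hstrict : ecc (joinPendant H u r g) (.inr (.inr ⟨g - 1, by omega⟩))
      < ecc (joinPendant H u r 3) (phi V r g hg hrg (.inr (.inr ⟨g - 1, by omega⟩))) := by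
    have hpp : ppv g (g - 1) = 2 := by unfold ppv; split <;> omega
    refine lt_of_le_of_lt (jp_eccC hH hg3 hrg (g - 1) (by omega)) ?_
    simp only [phi]
    unfold phiC
    split
    case isTrue h =>
      have h' : ppv g (g - 1) ≤ g - 4 := h
      refine lt_of_lt_of_le ?_ (lowP (r - g + ppv g (g - 1)) (by omega))
      omega
    case isFalse h =>
      have h' : ¬ ppv g (g - 1) ≤ g - 4 := h
      refine lt_of_lt_of_le ?_ (lowC (ppv g (g - 1) - (g - 3)) (by
        have := ppv_le g (g - 1) (by omega) (by omega); omega))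
      omega
  -- assemble
  have hbij : Function.Bijective (phi V r g hg hrg) := by
    refine (Fintype.bijective_iff_injective_and_card _).2 ⟨phi_inj V r g hg hrg, ?_⟩
    simp only [Fintype.card_sum, Fintype.card_fin]
    omega
  have hsum : ∑ v, ecc (joinPendant H u r 3) (phi V r g hg hrg v)
      = totalEcc (joinPendant H u r 3) :=
    Fintype.sum_bijective _ hbij _ _ (fun _ => rfl)
  calc totalEcc (joinPendant H u r g) = ∑ v, ecc (joinPendant H u r g) v := rfl
    _ < ∑ v, ecc (joinPendant H u r 3) (phi V r g hg hrg v) :=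
        Finset.sum_lt_sum (fun i _ => hle i)
          ⟨.inr (.inr ⟨g - 1, by omega⟩), Finset.mem_univ _, hstrict⟩
    _ = totalEcc (joinPendant H u r 3) := hsum
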